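/- Assume that 2^μ = μ⁺ for every limit cardinal μ and that there are no Mahlo cardinals. Then for every set A of infinite regular cardinals, spec(A) ⊆ pcf(A) ∪ lim(A): every regular cardinal in spec(A) either belongs to pcf(A) or is a limit point of A. -/

import Mathlib

universe u

open Cardinal Set

namespace TukeySpec

/-- A subset `S` of a preorder is cofinal if every element has an upper bound in `S`. -/
def IsCofinal {P : Type*} [Preorder P] (S : Set P) : Prop :=
  ∀ p : P, ∃ s ∈ S, p ≤ s

/-- `Q` is a Tukey quotient of `P` (i.e. `P ≥_T Q`): there is a map `P → Q`
sending cofinal sets to cofinal sets. -/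
def TukeyQuot (P : Type*) (Q : Type*) [Preorder P] [Preorder Q] : Prop :=
  ∃ φ : P → Q, ∀ S : Set P, IsCofinal S → IsCofinal (φ '' S)

/-- `P` has calibre `(κ, l, m)`. -/
def Calibre (P : Type u) [Preorder P] (κ l m : Cardinal.{u}) : Prop :=
  ∀ P' : Set P, #P' = κ → ∃ R ⊆ P', #R = l ∧ ∀ B ⊆ R, #B = m → BddAbove B

/-- `P` has calibre `κ` (the simplified form): every `κ`-sized subset has a
`κ`-sized subset which is bounded in `P`. -/
def CalibreSimple (P : Type u) [Preorder P] (κ : Cardinal.{u}) : Prop :=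
  ∀ P' : Set P, #P' = κ → ∃ R ⊆ P', #R = κ ∧ BddAbove R

/-- The Tukey spectrum of a poset: all regular cardinals `κ` with `P ≥_T κ`,
where `κ` carries its usual (ordinal) ordering. -/
def specPoset (P : Type u) [Preorder P] : Set Cardinal.{u} :=
  {κ | κ.IsRegular ∧ TukeyQuot P ↥(Set.Iio κ.ord)}

/-- The product `∏A` of a set of cardinals: all functions on `A` with
`f a < a` (as ordinals). -/
def piSet (A : Set Cardinal.{0}) : Set (↥A → Ordinal.{0}) :=
  {f | ∀ a : ↥A, f a < (a : Cardinal).ord}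

/-- A family of members of `∏A` is bounded if it has an upper bound in `(∏A, ≤)`
(pointwise order). -/
def BddIn (A : Set Cardinal.{0}) (S : Set (↥A → Ordinal.{0})) : Prop :=
  ∃ h ∈ piSet A, ∀ f ∈ S, ∀ a : ↥A, f a ≤ h a

/-- The Tukey spectrum of a set `A` of regular cardinals: all regular `κ` for which
there is a `κ`-sized family `F ⊆ ∏A` all of whose `κ`-sized subfamilies are
unbounded in `(∏A, ≤)`. -/
def spec (A : Set Cardinal.{0}) : Set Cardinal.{0} :=
  {κ | κ.IsRegular ∧ ∃ F ⊆ piSet A, #F = Cardinal.lift.{1} κ ∧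
    ∀ F₀ ⊆ F, #F₀ = Cardinal.lift.{1} κ → ¬ BddIn A F₀}

/-- `cf(∏A/D)`: the least cardinality of a subset of `∏A` which is cofinal
modulo the ultrafilter `D`. -/
noncomputable def cofUlt (A : Set Cardinal.{0}) (D : Ultrafilter ↥A) : Cardinal.{1} :=
  sInf {c : Cardinal.{1} | ∃ S ⊆ piSet A, #S = c ∧
    ∀ f ∈ piSet A, ∃ g ∈ S, {a : ↥A | f a ≤ g a} ∈ D}

/-- `pcf(A)`: the set of all cofinalities `cf(∏A/D)` as `D` ranges over
ultrafilters on `A`. -/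
def pcf (A : Set Cardinal.{0}) : Set Cardinal.{0} :=
  {κ | ∃ D : Ultrafilter ↥A, Cardinal.lift.{1} κ = cofUlt A D}

/-- `ub(F)`: the set of coordinates `a ∈ A` where the family `F` is unbounded. -/
def ub (A : Set Cardinal.{0}) (F : Set (↥A → Ordinal.{0})) : Set ↥A :=
  {a | ∀ β < (a : Cardinal).ord, ∃ f ∈ F, β < f a}

/-- The strong part of the Tukey spectrum: `l ∈ spec*(A)` iff there is an
`l`-sized family `F ⊆ ∏A` such that every `l`-sized subfamily has a set of
unbounded coordinates which is unbounded in `sup A`. -/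
def specStarMem (A : Set Cardinal.{0}) (l : Cardinal.{0}) : Prop :=
  l.IsRegular ∧ ∃ F ⊆ piSet A, #F = Cardinal.lift.{1} l ∧
    ∀ F₀ ⊆ F, #F₀ = Cardinal.lift.{1} l →
      ∀ β < sSup A, ∃ a ∈ ub A F₀, β < (a : Cardinal)

/-- `κ` is a limit point of the set `X` of cardinals. -/
def IsLimitPt (X : Set Cardinal.{0}) (κ : Cardinal.{0}) : Prop :=
  ∀ β < κ, ∃ x ∈ X, β < x ∧ x < κ

/-- `C` is a closed unbounded subset of `κ`. -/
def IsClubIn (C : Set Ordinal.{0}) (κ : Ordinal.{0}) : Prop :=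
  C ⊆ Set.Iio κ ∧ (∀ β < κ, ∃ o ∈ C, β < o) ∧
    ∀ β < κ, β ≠ 0 → (∀ γ < β, ∃ o ∈ C, γ < o ∧ o < β) → β ∈ C

/-- A set `S` of cardinals is stationary in `κ`: it meets every club of `κ`. -/
def StatIn (S : Set Cardinal.{0}) (κ : Cardinal.{0}) : Prop :=
  ∀ C : Set Ordinal.{0}, IsClubIn C κ.ord → ∃ a ∈ S, a.ord ∈ C

/-- `κ` is Mahlo: strongly inaccessible and the regular cardinals below `κ`
are stationary in `κ`. -/
def IsMahlo (κ : Cardinal.{0}) : Prop :=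
  κ.IsInaccessible ∧ StatIn {a | a < κ ∧ a.IsRegular} κ

/-- `κ` is weakly compact: strongly inaccessible and `κ → (κ)²₂`. -/
def IsWeaklyCompact (κ : Cardinal.{0}) : Prop :=
  κ.IsInaccessible ∧
    ∀ c : Ordinal.{0} → Ordinal.{0} → Bool,
      ∃ H ⊆ Set.Iio κ.ord, #H = Cardinal.lift.{1} κ ∧
        ∃ b : Bool, ∀ α ∈ H, ∀ β ∈ H, α < β → c α β = b

/-- `θ` carries a Jónsson algebra: there is `F` from finite subsets of `θ` to `θ`
such that `F` applied to finite subsets of any `θ`-sized `H ⊆ θ` covers `θ`. -/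
def CarriesJonsson (θ : Cardinal.{0}) : Prop :=
  ∃ F : Finset Ordinal.{0} → Ordinal.{0},
    (∀ s : Finset Ordinal.{0}, (↑s : Set Ordinal) ⊆ Set.Iio θ.ord → F s < θ.ord) ∧
    ∀ H ⊆ Set.Iio θ.ord, #H = Cardinal.lift.{1} θ →
      ∀ γ < θ.ord, ∃ s : Finset Ordinal.{0}, (↑s : Set Ordinal) ⊆ H ∧ F s = γ

/-- `cf(∏A/J_bd)`: the least cardinality of a subset of `∏A` cofinal modulo
the ideal of bounded subsets of `A`. -/
noncomputable def cofJbd (A : Set Cardinal.{0}) : Cardinal.{1} :=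
  sInf {c : Cardinal.{1} | ∃ S ⊆ piSet A, #S = c ∧
    ∀ f ∈ piSet A, ∃ g ∈ S, ∃ b < sSup A, ∀ a : ↥A, b < (a : Cardinal) → f a ≤ g a}

/-- `μ` is a limit cardinal. -/
def IsLimitCard (μ : Cardinal.{0}) : Prop :=
  ℵ₀ ≤ μ ∧ ∀ ν < μ, Order.succ ν < μ

/-! ### Auxiliary lemmas -/

section Aux

open Ordinal

/-- lift of a regular cardinal is regular -/
lemma isRegular_lift {κ : Cardinal.{0}} (h : κ.IsRegular) :
    (Cardinal.lift.{1} κ).IsRegular := by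
  constructor
  · exact Cardinal.aleph0_le_lift.mpr h.1
  · rw [← Cardinal.lift_ord, ← Ordinal.lift_cof]
    exact (Cardinal.lift_le.mpr h.2).trans le_rfl

lemma ord_pos_of_aleph0_le {a : Cardinal.{0}} (h : ℵ₀ ≤ a) : (0 : Ordinal) < a.ord := by
  have : (0 : Cardinal).ord < a.ord := Cardinal.ord_lt_ord.mpr (lt_of_lt_of_le aleph0_pos h)
  simpa [Cardinal.ord_zero] using this

lemma zero_mem_piSet {A : Set Cardinal.{0}} (hA : ∀ a ∈ A, ℵ₀ ≤ a) :
    (fun _ => (0 : Ordinal)) ∈ piSet A :=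
  fun a => ord_pos_of_aleph0_le (hA a a.2)

lemma mk_piSet_le_one {B : Set Cardinal.{0}} (hB : ¬ B.Nonempty) :
    #(piSet B) ≤ 1 := by
  rw [Set.not_nonempty_iff_eq_empty] at hB
  subst hB
  haveI : IsEmpty (↥(∅ : Set Cardinal.{0})) := by infer_instance
  refine Cardinal.mk_le_one_iff_set_subsingleton.mpr ?_
  intro f _ g _
  funext b
  exact (this.false b).elim

/-- surjective enumeration of a small nonempty set by `c₀.ord.ToType` -/
lemma exists_surj_toType {X : Type 1} (S : Set X) (c₀ : Cardinal.{0}) (hS : S.Nonempty)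
    (hle : #S ≤ Cardinal.lift.{1} c₀) :
    ∃ σ : c₀.ord.ToType → ↥S, Function.Surjective σ := by
  have hT : #(c₀.ord.ToType) = c₀ := by rw [Cardinal.mk_toType, Cardinal.card_ord]
  have : Cardinal.lift.{0} #↥S ≤ Cardinal.lift.{1} #(c₀.ord.ToType) := by
    rw [Cardinal.lift_uzero, hT]; exact hle
  obtain ⟨e⟩ := Cardinal.lift_mk_le'.mp this
  haveI : Nonempty ↥S := hS.to_subtype
  exact ⟨Function.invFun e, Function.invFun_surjective e.injective⟩

end Aux

section Count

/-- splitting off the top coordinate -/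
lemma mk_piSet_split {B : Set Cardinal.{0}} {lam : Cardinal.{0}} (hmem : lam ∈ B)
    (hub : ∀ b ∈ B, b ≤ lam) :
    #(piSet B) ≤ #(piSet (B ∩ Iio lam)) * Cardinal.lift.{1} lam := by
  have key : #(piSet B) ≤ #(↥(piSet (B ∩ Iio lam)) × ↥(Iio lam.ord)) := by
    refine Cardinal.mk_le_of_injective (f := fun f =>
      (⟨fun b => f.1 ⟨b.1, b.2.1⟩, fun b => f.2 ⟨b.1, b.2.1⟩⟩,
       ⟨f.1 ⟨lam, hmem⟩, f.2 ⟨lam, hmem⟩⟩)) ?_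
    intro f g h
    rw [Prod.ext_iff] at h
    obtain ⟨h1, h2⟩ := h
    have h1' := congrArg Subtype.val h1
    have h2' := congrArg Subtype.val h2
    refine Subtype.ext (funext fun b => ?_)
    rcases eq_or_lt_of_le (hub b.1 b.2) with heq | hlt
    · have hb : b = ⟨lam, hmem⟩ := Subtype.ext heq
      rw [hb]; exact h2'
    · have := congrFun h1' ⟨b.1, ⟨b.2, hlt⟩⟩
      simpa using this
  refine key.trans ?_
  rw [Cardinal.mk_prod, Cardinal.lift_id, Cardinal.lift_id, Ordinal.mk_Iio_ordinal,
    Cardinal.card_ord]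

/-- cardinality bound on `∏B` via GCH at limits: `≤ 2^(sup B)` always, and
`≤ sup B` when `sup B` is a successor. -/
lemma mk_piSet_bound (hgch : ∀ μ : Cardinal.{0}, IsLimitCard μ → 2 ^ μ = Order.succ μ)
    (lam : Cardinal.{0}) :
    ∀ B : Set Cardinal.{0}, BddAbove B → (∀ a ∈ B, ℵ₀ ≤ a) → B.Nonempty → sSup B = lam →
      #(piSet B) ≤ Cardinal.lift.{1} (2 ^ lam) ∧
      ((∃ ν < lam, lam ≤ Order.succ ν) → #(piSet B) ≤ Cardinal.lift.{1} lam) := by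
  induction lam using WellFoundedLT.induction with
  | _ lam IH =>
  intro B hbdd hB hne hsup
  have hBle : ∀ b ∈ B, b ≤ lam := fun b hb => hsup ▸ le_csSup hbdd hb
  obtain ⟨a₀, ha₀⟩ := hne
  have hlaminf : ℵ₀ ≤ lam := (hB a₀ ha₀).trans (hBle a₀ ha₀)
  have hliftinf : ℵ₀ ≤ Cardinal.lift.{1} lam := Cardinal.aleph0_le_lift.mpr hlaminf
  -- part 1
  have hmkB : #(↥B) ≤ Cardinal.lift.{1} lam := by
    have : #(↥B) ≤ #(↥(Iio (lam.ord + 1))) := by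
      refine Cardinal.mk_le_of_injective (f := fun b =>
        (⟨(b.1 : Cardinal).ord, lt_of_le_of_lt (Cardinal.ord_le_ord.mpr (hBle b.1 b.2))
          (Order.lt_succ_of_le le_rfl)⟩ : ↥(Iio (lam.ord + 1)))) ?_
      intro b c h
      exact Subtype.ext (Cardinal.ord_injective (congrArg Subtype.val h))
    refine this.trans ?_
    rw [Ordinal.mk_Iio_ordinal, Ordinal.card_add, Cardinal.card_ord, Ordinal.card_one,
      Cardinal.add_one_eq hlaminf]
  have h1 : #(piSet B) ≤ Cardinal.lift.{1} (2 ^ lam) := by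
    have step : #(piSet B) ≤ #(↥B → ↥(Iio lam.ord)) := by
      refine Cardinal.mk_le_of_injective (f := fun f b =>
        (⟨f.1 b, lt_of_lt_of_le (f.2 b) (Cardinal.ord_le_ord.mpr (hBle b.1 b.2))⟩ :
          ↥(Iio lam.ord))) ?_
      intro f g h
      refine Subtype.ext (funext fun b => ?_)
      have := congrFun h b
      exact congrArg Subtype.val this
    have e1 : #(↥B → ↥(Iio lam.ord)) = #(↥(Iio lam.ord)) ^ #(↥B) :=
      (Cardinal.power_def _ _).symm
    have e2 : #(↥(Iio lam.ord)) = Cardinal.lift.{1} lam := by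
      rw [Ordinal.mk_Iio_ordinal, Cardinal.card_ord]
    have e3 : #(↥(Iio lam.ord)) ^ #(↥B) ≤ Cardinal.lift.{1} lam ^ Cardinal.lift.{1} lam := by
      rw [e2]
      exact Cardinal.power_le_power_left (lt_of_lt_of_le Cardinal.aleph0_pos hliftinf).ne' hmkB
    refine step.trans ?_
    rw [e1]
    refine e3.trans ?_
    rw [Cardinal.power_self_eq hliftinf, ← Cardinal.lift_two_power]
  refine ⟨h1, ?_⟩
  -- part 2
  rintro ⟨ν, hν, hle⟩
  have hlameq : lam = Order.succ ν := le_antisymm hle (Order.succ_le_of_lt hν)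
  have hmem : lam ∈ B := by
    by_contra hmem
    have : ∀ b ∈ B, b ≤ ν := by
      intro b hb
      have hblt : b < lam := lt_of_le_of_ne (hBle b hb) (by rintro rfl; exact hmem hb)
      rw [hlameq] at hblt
      exact Order.lt_succ_iff.mp hblt
    have : lam ≤ ν := hsup ▸ csSup_le ⟨a₀, ha₀⟩ this
    exact absurd hν (not_lt.mpr this)
  have hsplit := mk_piSet_split hmem hBle
  have hB' : #(piSet (B ∩ Iio lam)) ≤ Cardinal.lift.{1} lam := by
    by_cases hne' : (B ∩ Iio lam).Nonempty
    · set lam' := sSup (B ∩ Iio lam) with hlam'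
      have hlam'lt : lam' < lam := by
        have hub' : lam' ≤ ν := csSup_le hne' fun b hb => by
          have := hb.2
          rw [mem_Iio, hlameq, Order.lt_succ_iff] at this
          exact this
        exact lt_of_le_of_lt hub' hν
      have hIH := IH lam' hlam'lt (B ∩ Iio lam) (hbdd.mono Set.inter_subset_left)
        (fun a ha => hB a ha.1) hne' rfl
      by_cases hcase : ∃ ν' < lam', lam' ≤ Order.succ ν'
      · exact (hIH.2 hcase).trans (Cardinal.lift_le.mpr hlam'lt.le)
      · push_neg at hcase
        obtain ⟨a', ha'⟩ := hne'
        have hgch' := hgch lam' ⟨(hB a' ha'.1).trans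
          (le_csSup (hbdd.mono Set.inter_subset_left) ha'), hcase⟩
        have := hIH.1
        rw [hgch'] at this
        exact this.trans (Cardinal.lift_le.mpr (Order.succ_le_of_lt hlam'lt))
    · exact (mk_piSet_le_one hne').trans (le_trans (by norm_num) hliftinf)
  refine hsplit.trans ?_
  calc #(piSet (B ∩ Iio lam)) * Cardinal.lift.{1} lam
      ≤ Cardinal.lift.{1} lam * Cardinal.lift.{1} lam := mul_le_mul_left hB' _
    _ = Cardinal.lift.{1} lam := Cardinal.mul_eq_self hliftinf

end Count

section Pcf

lemma univ_mem_ultra {α : Type*} (D : Ultrafilter α) : Set.univ ∈ D := Filter.univ_mem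

/-- pcf is monotone under subsets (for sets of infinite cardinals). -/
lemma pcf_mono {B A : Set Cardinal.{0}} (hBA : B ⊆ A) (hA : ∀ a ∈ A, ℵ₀ ≤ a)
    {κ : Cardinal.{0}} (hκ : κ ∈ pcf B) : κ ∈ pcf A := by
  obtain ⟨D', hD'⟩ := hκ
  let m : ↥B → ↥A := Set.inclusion hBA
  refine ⟨Ultrafilter.map m D', ?_⟩
  rw [hD']
  have h0 : ∀ a : ↥A, (0 : Ordinal) < (a : Cardinal).ord :=
    fun a => ord_pos_of_aleph0_le (hA a a.2)
  classical
  set ext : (↥B → Ordinal.{0}) → (↥A → Ordinal.{0}) :=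
    fun g a => if h : (a : Cardinal) ∈ B then g ⟨a, h⟩ else 0 with hext
  set res : (↥A → Ordinal.{0}) → (↥B → Ordinal.{0}) :=
    fun f b => f (m b) with hres
  have hextPi : ∀ g ∈ piSet B, ext g ∈ piSet A := by
    intro g hg a
    by_cases h : (a : Cardinal) ∈ B
    · show (if h : (a : Cardinal) ∈ B then g ⟨a, h⟩ else 0) < _
      rw [dif_pos h]
      exact hg ⟨a, h⟩
    · show (if h : (a : Cardinal) ∈ B then g ⟨a, h⟩ else 0) < _
      rw [dif_neg h]
      exact h0 a
  have hresPi : ∀ f ∈ piSet A, res f ∈ piSet B := fun f hf b => hf (m b)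
  have hextres : ∀ g : ↥B → Ordinal.{0}, ∀ b : ↥B, ext g (m b) = g b := by
    intro g b
    have hb : ((m b : ↥A) : Cardinal) ∈ B := b.2
    show (if h : ((m b : ↥A) : Cardinal) ∈ B then g ⟨(m b : ↥A), h⟩ else 0) = g b
    rw [dif_pos hb]
  apply le_antisymm
  · -- cofUlt B D' ≤ cofUlt A (map m D')
    refine le_csInf ?_ ?_
    · exact ⟨#(piSet A), piSet A, le_rfl, rfl, fun f hf => ⟨f, hf, by
        rw [show {a : ↥A | f a ≤ f a} = Set.univ from by ext; simp]
        exact univ_mem_ultra _⟩⟩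
    · rintro c ⟨S, hSsub, hScard, hScof⟩
      refine csInf_le_of_le (OrderBot.bddBelow _)
        (show #(↥(res '' S)) ∈ _ from ⟨res '' S, ?_, rfl, ?_⟩) ?_
      · rintro _ ⟨f, hf, rfl⟩
        exact hresPi f (hSsub hf)
      · intro f' hf'
        obtain ⟨g, hg, hmemD⟩ := hScof (ext f') (hextPi f' hf')
        rw [Ultrafilter.mem_map] at hmemD
        refine ⟨res g, Set.mem_image_of_mem _ hg, ?_⟩
        refine Filter.mem_of_superset hmemD ?_
        intro b hb
        simp only [Set.mem_preimage] at hb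
        show f' b ≤ g (m b)
        rw [← hextres f' b]
        exact hb
      · rw [← hScard]
        exact Cardinal.mk_image_le
  · -- cofUlt A (map m D') ≤ cofUlt B D'
    refine le_csInf ?_ ?_
    · exact ⟨#(piSet B), piSet B, le_rfl, rfl, fun f hf => ⟨f, hf, by
        rw [show {b : ↥B | f b ≤ f b} = Set.univ from by ext; simp]
        exact univ_mem_ultra _⟩⟩
    · rintro c ⟨S', hS'sub, hS'card, hS'cof⟩
      refine csInf_le_of_le (OrderBot.bddBelow _)
        (show #(↥(ext '' S')) ∈ _ from ⟨ext '' S', ?_, rfl, ?_⟩) ?_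
      · rintro _ ⟨g, hg, rfl⟩
        exact hextPi g (hS'sub hg)
      · intro f hf
        obtain ⟨g, hg, hmemD⟩ := hS'cof (res f) (hresPi f hf)
        refine ⟨ext g, Set.mem_image_of_mem _ hg, ?_⟩
        rw [Ultrafilter.mem_map]
        refine Filter.mem_of_superset hmemD ?_
        intro b hb
        simp only [Set.mem_preimage]
        show f (m b) ≤ ext g (m b)
        rw [hextres]
        exact hb
      · rw [← hS'card]
        exact Cardinal.mk_image_le

end Pcf

section Principal

/-- every member of `A` is in `pcf A` (via the principal ultrafilter). -/
lemma mem_pcf_of_mem {A : Set Cardinal.{0}} (hA : ∀ a ∈ A, a.IsRegular)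
    {κ : Cardinal.{0}} (hκ : κ ∈ A) : κ ∈ pcf A := by
  classical
  have hκreg : κ.IsRegular := hA κ hκ
  have h0 : ∀ a : ↥A, (0 : Ordinal) < (a : Cardinal).ord :=
    fun a => ord_pos_of_aleph0_le ((hA a a.2).1)
  set pt : ↥A := ⟨κ, hκ⟩ with hpt
  set Scan : Set (↥A → Ordinal.{0}) := Set.range (fun β : ↥(Iio κ.ord) =>
    fun a : ↥A => if (a : Cardinal) = κ then β.1 else 0) with hScan
  have hScanPi : Scan ⊆ piSet A := by
    rintro _ ⟨β, rfl⟩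
    intro a
    by_cases h : (a : Cardinal) = κ
    · show (if (a : Cardinal) = κ then β.1 else 0) < _
      rw [if_pos h, show ((a : Cardinal)).ord = κ.ord from by rw [h]]
      exact β.2
    · show (if (a : Cardinal) = κ then β.1 else 0) < _
      rw [if_neg h]
      exact h0 a
  have hScanCard : #(↥Scan) = Cardinal.lift.{1} κ := by
    rw [hScan, Cardinal.mk_range_eq, Ordinal.mk_Iio_ordinal, Cardinal.card_ord]
    intro β γ h
    have h2 : (β : Ordinal) = γ := by simpa [hpt] using congrFun h pt
    exact Subtype.ext h2
  have hScanCof : ∀ f ∈ piSet A, ∃ g ∈ Scan, {a : ↥A | f a ≤ g a} ∈ (pure pt : Ultrafilter ↥A) := by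
    intro f hf
    refine ⟨_, Set.mem_range_self ⟨f pt, hf pt⟩, ?_⟩
    rw [Ultrafilter.mem_pure]
    show f pt ≤ (if (pt : Cardinal) = κ then f pt else 0)
    rw [if_pos rfl]
  refine ⟨pure pt, le_antisymm ?_ ?_⟩
  · refine le_csInf ⟨Cardinal.lift.{1} κ, Scan, hScanPi, hScanCard, hScanCof⟩ ?_
    rintro c ⟨S, hSsub, hScard, hScof⟩
    by_contra hlt
    push_neg at hlt
    have hSne : S.Nonempty := by
      rcases Set.eq_empty_or_nonempty S with rfl | h
      · obtain ⟨g, hg, -⟩ := hScof (fun _ => 0) (fun a => h0 a)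
        exact absurd hg (Set.notMem_empty g)
      · exact h
    obtain ⟨c₀, hc₀lt, rfl⟩ : ∃ c₀ : Cardinal.{0}, c₀ < κ ∧ Cardinal.lift.{1} c₀ = c := by
      obtain ⟨c₀, rfl⟩ := Cardinal.mem_range_lift_of_le hlt.le
      exact ⟨c₀, Cardinal.lift_lt.mp hlt, rfl⟩
    obtain ⟨σ, hσ⟩ := exists_surj_toType S c₀ hSne (le_of_eq hScard)
    set o : Ordinal := iSup (fun t : c₀.ord.ToType => (σ t).1 pt + 1) with ho
    have holt : o < κ.ord := by
      refine Ordinal.iSup_lt_ord ?_ ?_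
      · rw [Cardinal.mk_toType, Cardinal.card_ord, hκreg.cof_eq]
        exact hc₀lt
      · intro t
        exact (Cardinal.isSuccLimit_ord hκreg.1).succ_lt (hSsub (σ t).2 pt)
    set f : ↥A → Ordinal.{0} := fun a => if (a : Cardinal) = κ then o else 0 with hfdef
    have hfPi : f ∈ piSet A := by
      intro a
      by_cases h : (a : Cardinal) = κ
      · show (if (a : Cardinal) = κ then o else 0) < _
        rw [if_pos h, show ((a : Cardinal)).ord = κ.ord from by rw [h]]
        exact holt
      · show (if (a : Cardinal) = κ then o else 0) < _
        rw [if_neg h]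
        exact h0 a
    obtain ⟨g, hgS, hgD⟩ := hScof f hfPi
    rw [Ultrafilter.mem_pure] at hgD
    have hfg : o ≤ g pt := by
      have : f pt ≤ g pt := hgD
      rwa [show f pt = o from by rw [hfdef]; exact if_pos rfl] at this
    obtain ⟨t, ht⟩ := hσ ⟨g, hgS⟩
    have hgo : g pt + 1 ≤ o := by
      have := Ordinal.le_iSup (fun t : c₀.ord.ToType => (σ t).1 pt + 1) t
      rw [ht] at this
      exact this
    have h2 : g pt < g pt + 1 := by
      rw [Ordinal.add_one_eq_succ]
      exact Order.lt_succ _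
    exact absurd ((hfg.trans_lt h2).trans_le hgo) (lt_irrefl o)
  · exact csInf_le_of_le (OrderBot.bddBelow _)
      (show Cardinal.lift.{1} κ ∈ _ from ⟨Scan, hScanPi, hScanCard, hScanCof⟩) le_rfl

end Principal

section MainCase

/-- If `B` is a set of regular cardinals which is unbounded below `lam` and
`∏B` has size exactly `lam⁺`, then `lam⁺ ∈ pcf B`. -/
lemma succ_mem_pcf_of_unbounded {B : Set Cardinal.{0}} (hB : ∀ a ∈ B, a.IsRegular)
    {lam : Cardinal.{0}} (hbdd : BddAbove B)
    (hlaminf : ℵ₀ ≤ lam)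
    (hunb : ∀ β < lam, ∃ b ∈ B, β < b ∧ b < lam)
    (hupper : #(piSet B) ≤ Cardinal.lift.{1} (Order.succ lam))
    (hlower : Cardinal.lift.{1} (Order.succ lam) ≤ #(piSet B)) :
    Order.succ lam ∈ pcf B := by
  classical
  have h0 : ∀ a : ↥B, (0 : Ordinal) < (a : Cardinal).ord :=
    fun a => ord_pos_of_aleph0_le ((hB a a.2).1)
  -- the set of non-accumulation points of B below lam
  set Bstar : Set ↥B :=
    {a : ↥B | (a : Cardinal) < lam ∧ sSup {b ∈ B | b < (a : Cardinal)} < (a : Cardinal)}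
    with hBstar
  have hBstarUnb : ∀ β < lam, ∃ a : ↥B, a ∈ Bstar ∧ β < (a : Cardinal) := by
    intro β hβ
    obtain ⟨b₀, hb₀B, hb₀1, hb₀2⟩ := hunb β hβ
    set T : Set Cardinal.{0} := {b ∈ B | β < b ∧ b < lam} with hT
    have hTne : T.Nonempty := ⟨b₀, hb₀B, hb₀1, hb₀2⟩
    set a := sInf T with ha
    have haT : a ∈ T := csInf_mem hTne
    refine ⟨⟨a, haT.1⟩, ⟨haT.2.2, ?_⟩, haT.2.1⟩
    have hle : sSup {b ∈ B | b < a} ≤ β := by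
      rcases Set.eq_empty_or_nonempty {b ∈ B | b < a} with he | hne
      · rw [he, csSup_empty]
        exact zero_le
      · refine csSup_le hne ?_
        rintro b ⟨hbB, hba⟩
        by_contra hbβ
        push_neg at hbβ
        have hbT : b ∈ T := ⟨hbB, hbβ, hba.trans haT.2.2⟩
        exact absurd (csInf_le (OrderBot.bddBelow T) hbT) (not_le.mpr hba)
    exact lt_of_le_of_lt hle haT.2.1
  -- the filter of co-bounded sets relativized to Bstar
  set Flt : Filter ↥B :=
    { sets := {X | ∃ β < lam, ∀ a : ↥B, a ∈ Bstar → β < (a : Cardinal) → a ∈ X}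
      univ_sets := ⟨0, lt_of_lt_of_le aleph0_pos hlaminf, fun a _ _ => Set.mem_univ a⟩
      sets_of_superset := by
        rintro X Y ⟨β, hβ, hX⟩ hXY
        exact ⟨β, hβ, fun a h1 h2 => hXY (hX a h1 h2)⟩
      inter_sets := by
        rintro X Y ⟨β, hβ, hX⟩ ⟨γ, hγ, hY⟩
        exact ⟨max β γ, max_lt hβ hγ, fun a h1 h2 =>
          ⟨hX a h1 (lt_of_le_of_lt le_sup_left h2), hY a h1 (lt_of_le_of_lt le_sup_right h2)⟩⟩ }
    with hFlt
  haveI hNB : Flt.NeBot := by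
    rw [Filter.neBot_iff]
    intro hbot
    have hmem : (∅ : Set ↥B) ∈ Flt := by rw [hbot]; exact Filter.mem_bot
    obtain ⟨β, hβ, h⟩ := hmem
    obtain ⟨a, ha1, ha2⟩ := hBstarUnb β hβ
    exact h a ha1 ha2
  set D : Ultrafilter ↥B := Ultrafilter.of Flt with hD
  have hDle : ∀ X ∈ Flt, X ∈ D := fun X hX => Ultrafilter.of_le Flt hX
  have hBstarD : Bstar ∈ D :=
    hDle _ ⟨0, lt_of_lt_of_le aleph0_pos hlaminf, fun a h1 _ => h1⟩
  have hCbD : ∀ β < lam, {a : ↥B | β < (a : Cardinal)} ∈ D :=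
    fun β hβ => hDle _ ⟨β, hβ, fun a _ h2 => h2⟩
  have hPiBmem : ∃ S ⊆ piSet B, #(↥S) = #(piSet B) ∧
      ∀ f ∈ piSet B, ∃ g ∈ S, {a : ↥B | f a ≤ g a} ∈ D :=
    ⟨piSet B, le_rfl, rfl, fun f hf => ⟨f, hf, by
      rw [show {a : ↥B | f a ≤ f a} = Set.univ from by ext; simp]
      exact univ_mem_ultra _⟩⟩
  refine ⟨D, le_antisymm ?_ ?_⟩
  · -- lower bound: every cofinal family has size ≥ lam⁺
    refine le_csInf ⟨#(piSet B), hPiBmem⟩ ?_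
    rintro c ⟨S, hSsub, hScard, hScof⟩
    by_contra hlt
    push_neg at hlt
    have hclam : c ≤ Cardinal.lift.{1} lam := by
      rw [Cardinal.lift_succ] at hlt
      exact Order.lt_succ_iff.mp hlt
    have hSne : S.Nonempty := by
      rcases Set.eq_empty_or_nonempty S with rfl | h
      · obtain ⟨g, hg, -⟩ := hScof (fun _ => 0) (fun a => h0 a)
        exact absurd hg (Set.notMem_empty g)
      · exact h
    obtain ⟨σ, hσ⟩ := exists_surj_toType S lam hSne (hScard ▸ hclam)
    set rank : lam.ord.ToType → Ordinal.{0} :=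
      fun t => ((Ordinal.ToType.mk (o := lam.ord)).symm t).1 with hrank
    have hranklt : ∀ t, rank t < lam.ord := fun t => ((Ordinal.ToType.mk (o := lam.ord)).symm t).2
    have hrankinj : Function.Injective rank := by
      intro t s h
      have := Subtype.ext (p := fun o => o ∈ Iio lam.ord) h
      exact (Ordinal.ToType.mk (o := lam.ord)).symm.injective this
    -- diagonal escape function
    set f : ↥B → Ordinal.{0} := fun a =>
      if h : a ∈ Bstar then
        iSup (fun i : {t : lam.ord.ToType //
            rank t < (sSup {b ∈ B | b < (a : Cardinal)}).ord} => (σ i.1).1 a + 1)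
      else 0 with hf
    have hfPi : f ∈ piSet B := by
      intro a
      by_cases h : a ∈ Bstar
      · have hfa : f a = iSup (fun i : {t : lam.ord.ToType //
            rank t < (sSup {b ∈ B | b < (a : Cardinal)}).ord} => (σ i.1).1 a + 1) := by
          rw [hf]; exact dif_pos h
        rw [hfa]
        refine Ordinal.iSup_lt_ord ?_ ?_
        · rw [(hB a a.2).cof_eq]
          refine lt_of_le_of_lt ?_ h.2
          have hJ : Function.Injective (fun i : {t : lam.ord.ToType //
              rank t < (sSup {b ∈ B | b < (a : Cardinal)}).ord} =>
              Ordinal.ToType.mk (o := (sSup {b ∈ B | b < (a : Cardinal)}).ord) ⟨rank i.1, i.2⟩) := by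
            intro i j hij
            have h2 : (⟨rank i.1, i.2⟩ : Set.Iio (sSup {b ∈ B | b < (a : Cardinal)}).ord)
                = ⟨rank j.1, j.2⟩ := Ordinal.ToType.mk.injective hij
            exact Subtype.ext (hrankinj (Subtype.mk_eq_mk.mp h2))
          have := Cardinal.mk_le_of_injective hJ
          rwa [Cardinal.mk_toType, Cardinal.card_ord] at this
        · intro i
          exact (Cardinal.isSuccLimit_ord (hB a a.2).1).succ_lt ((hSsub (σ i.1).2) a)
      · have hfa : f a = 0 := by rw [hf]; exact dif_neg h
        rw [hfa]
        exact h0 a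
    obtain ⟨g, hgS, hgD⟩ := hScof f hfPi
    obtain ⟨t₀, ht₀⟩ := hσ ⟨g, hgS⟩
    have hξ : (rank t₀).card < lam := Cardinal.lt_ord.mp (hranklt t₀)
    obtain ⟨b, hbB, hb1, hb2⟩ := hunb (rank t₀).card hξ
    have hXD : {a : ↥B | f a ≤ g a} ∩ (Bstar ∩ {a : ↥B | b < (a : Cardinal)}) ∈ D :=
      Filter.inter_mem hgD (Filter.inter_mem hBstarD (hCbD b hb2))
    obtain ⟨a, hafg, haBstar, hab⟩ := Ultrafilter.nonempty_of_mem hXD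
    -- on such a coordinate f escapes g, contradiction
    have hbsa : b ≤ sSup {b' ∈ B | b' < (a : Cardinal)} :=
      le_csSup (hbdd.mono (Set.sep_subset _ _)) ⟨hbB, hab⟩
    have hi : rank t₀ < (sSup {b' ∈ B | b' < (a : Cardinal)}).ord :=
      lt_of_lt_of_le (Cardinal.lt_ord.mpr hb1) (Cardinal.ord_le_ord.mpr hbsa)
    have hfa : f a = iSup (fun i : {t : lam.ord.ToType //
        rank t < (sSup {b' ∈ B | b' < (a : Cardinal)}).ord} => (σ i.1).1 a + 1) := by
      rw [hf]; exact dif_pos haBstar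
    have hga : (σ t₀).1 = g := congrArg Subtype.val ht₀
    have hge : g a + 1 ≤ f a := by
      rw [hfa]
      have := Ordinal.le_iSup (fun i : {t : lam.ord.ToType //
          rank t < (sSup {b' ∈ B | b' < (a : Cardinal)}).ord} => (σ i.1).1 a + 1) ⟨t₀, hi⟩
      rwa [hga] at this
    have : g a < g a := by
      have h2 : g a < g a + 1 := by
        rw [Ordinal.add_one_eq_succ]; exact Order.lt_succ _
      exact lt_of_lt_of_le (lt_of_lt_of_le h2 hge) hafg
    exact absurd this (lt_irrefl _)
  · -- upper bound: piSet B itself is cofinal and has size lam⁺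
    obtain ⟨S, hS1, hS2, hS3⟩ := hPiBmem
    exact csInf_le_of_le (OrderBot.bddBelow _)
      (show #(piSet B) ∈ _ from ⟨S, hS1, hS2, hS3⟩) hupper

end MainCase

section Reduction

/-- If `κ ∈ spec A`, `κ ∉ A`, and all elements of `A` are below or above `κ`,
then the product over the part of `A` below `κ` must have size at least `κ`. -/
lemma reduction {A : Set Cardinal.{0}} (hA : ∀ a ∈ A, a.IsRegular) {κ : Cardinal.{0}}
    (hκreg : κ.IsRegular)
    (hhigh : ∀ a ∈ A, ¬ a < κ → κ < a)
    (F : Set (↥A → Ordinal.{0})) (hFsub : F ⊆ piSet A)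
    (hFcard : #(↥F) = Cardinal.lift.{1} κ)
    (hFunb : ∀ F₀ ⊆ F, #(↥F₀) = Cardinal.lift.{1} κ → ¬ BddIn A F₀) :
    Cardinal.lift.{1} κ ≤ #(piSet {a ∈ A | a < κ}) := by
  classical
  set B : Set Cardinal.{0} := {a ∈ A | a < κ} with hBdef
  set r : (↥A → Ordinal.{0}) → (↥B → Ordinal.{0}) :=
    fun f b => f ⟨b.1, b.2.1⟩ with hr
  have hrPi : ∀ f ∈ piSet A, r f ∈ piSet B := fun f hf b => hf ⟨b.1, b.2.1⟩
  have hFne : F.Nonempty := by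
    rw [← Set.nonempty_coe_sort, ← Cardinal.mk_ne_zero_iff, hFcard]
    exact ne_of_gt (lt_of_lt_of_le aleph0_pos (Cardinal.aleph0_le_lift.mpr hκreg.1))
  obtain ⟨σF, hσF⟩ := exists_surj_toType F κ hFne (le_of_eq hFcard)
  set H : ↥A → Ordinal.{0} := fun a => iSup (fun t : κ.ord.ToType => (σF t).1 a + 1) with hH
  have hHlt : ∀ a : ↥A, κ < (a : Cardinal) → H a < (a : Cardinal).ord := by
    intro a ha
    refine Ordinal.iSup_lt_ord ?_ ?_
    · rw [Cardinal.mk_toType, Cardinal.card_ord, (hA a a.2).cof_eq]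
      exact ha
    · intro t
      exact (Cardinal.isSuccLimit_ord (hA a a.2).1).succ_lt (hFsub (σF t).2 a)
  have hHge : ∀ f ∈ F, ∀ a : ↥A, f a ≤ H a := by
    intro f hf a
    obtain ⟨t, ht⟩ := hσF ⟨f, hf⟩
    have h1 := Ordinal.le_iSup (fun t : κ.ord.ToType => (σF t).1 a + 1) t
    rw [ht] at h1
    have h2 : f a < f a + 1 := by
      rw [Ordinal.add_one_eq_succ]; exact Order.lt_succ _
    exact le_of_lt (lt_of_lt_of_le h2 h1)
  by_contra hcon
  push_neg at hcon
  have hGsub : r '' F ⊆ piSet B := by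
    rintro _ ⟨f, hf, rfl⟩
    exact hrPi f (hFsub hf)
  have hGlt : #(↥(r '' F)) < Cardinal.lift.{1} κ :=
    lt_of_le_of_lt (Cardinal.mk_le_mk_of_subset hGsub) hcon
  set Fib : ↥(r '' F) → Set (↥A → Ordinal.{0}) :=
    fun g => {f | f ∈ F ∧ r f = g.1} with hFib
  obtain ⟨g₀, hg₀⟩ : ∃ g₀ : ↥(r '' F), Cardinal.lift.{1} κ ≤ #(↥(Fib g₀)) := by
    by_contra hall
    push_neg at hall
    have hsub2 : F ⊆ ⋃ g : ↥(r '' F), Fib g := by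
      intro f hf
      exact Set.mem_iUnion.mpr ⟨⟨r f, Set.mem_image_of_mem r hf⟩, hf, rfl⟩
    have h1 : #(↥F) ≤ #(↥(r '' F)) * ⨆ g : ↥(r '' F), #(↥(Fib g)) :=
      (Cardinal.mk_le_mk_of_subset hsub2).trans (Cardinal.mk_iUnion_le _)
    have h2 : ⨆ g : ↥(r '' F), #(↥(Fib g)) < Cardinal.lift.{1} κ :=
      Cardinal.iSup_lt_of_isRegular (isRegular_lift hκreg) hGlt hall
    have h3 := Cardinal.mul_lt_of_lt (Cardinal.aleph0_le_lift.mpr hκreg.1) hGlt h2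
    rw [hFcard] at h1
    exact absurd (lt_of_le_of_lt h1 h3) (lt_irrefl _)
  have hFibsub : Fib g₀ ⊆ F := fun f hf => hf.1
  have hFibcard : #(↥(Fib g₀)) = Cardinal.lift.{1} κ :=
    le_antisymm (hFcard ▸ Cardinal.mk_le_mk_of_subset hFibsub) hg₀
  refine hFunb (Fib g₀) hFibsub hFibcard ?_
  refine ⟨fun a => if hlt : (a : Cardinal) < κ then g₀.1 ⟨a.1, ⟨a.2, hlt⟩⟩ else H a, ?_, ?_⟩
  · intro a
    by_cases hlt : (a : Cardinal) < κ
    · show (if hlt : (a : Cardinal) < κ then g₀.1 ⟨a.1, ⟨a.2, hlt⟩⟩ else H a) < _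
      rw [dif_pos hlt]
      exact hGsub g₀.2 ⟨a.1, ⟨a.2, hlt⟩⟩
    · show (if hlt : (a : Cardinal) < κ then g₀.1 ⟨a.1, ⟨a.2, hlt⟩⟩ else H a) < _
      rw [dif_neg hlt]
      exact hHlt a (hhigh a a.2 hlt)
  · intro f hf a
    by_cases hlt : (a : Cardinal) < κ
    · have heq : r f = g₀.1 := hf.2
      have h1 : f a = g₀.1 ⟨a.1, ⟨a.2, hlt⟩⟩ := by
        rw [← heq]
      rw [h1]
      show _ ≤ (if hlt : (a : Cardinal) < κ then g₀.1 ⟨a.1, ⟨a.2, hlt⟩⟩ else H a)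
      rw [dif_pos hlt]
    · show f a ≤ (if hlt : (a : Cardinal) < κ then g₀.1 ⟨a.1, ⟨a.2, hlt⟩⟩ else H a)
      rw [dif_neg hlt]
      exact hHge f hf.1 a

end Reduction

/-- If `2^μ = μ⁺` for every limit cardinal `μ` and there are no Mahlo
cardinals, then for every set `A` of infinite regular cardinals,
`spec(A) ⊆ pcf(A) ∪ lim(A)`. -/
theorem statement9
    (hgch : ∀ μ : Cardinal.{0}, IsLimitCard μ → 2 ^ μ = Order.succ μ)
    (hnoMahlo : ∀ κ : Cardinal.{0}, ¬ IsMahlo κ)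
    (A : Set Cardinal.{0}) (hA : ∀ a ∈ A, a.IsRegular) :
    spec A ⊆ pcf A ∪ {κ | IsLimitPt A κ} := by
  intro κ hκ
  obtain ⟨hκreg, F, hFsub, hFcard, hFunb⟩ := hκ
  by_cases hlim : IsLimitPt A κ
  · exact Set.mem_union_right _ hlim
  refine Set.mem_union_left _ ?_
  by_cases hκA : κ ∈ A
  · exact mem_pcf_of_mem hA hκA
  simp only [IsLimitPt] at hlim
  push_neg at hlim
  obtain ⟨β₀, hβ₀κ, hβ₀⟩ := hlim
  have hhigh : ∀ a ∈ A, ¬ a < κ → κ < a := fun a ha h =>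
    lt_of_le_of_ne (not_lt.mp h) (fun he => hκA (he ▸ ha))
  set B : Set Cardinal.{0} := {a ∈ A | a < κ} with hBdef
  have hBsubA : B ⊆ A := Set.sep_subset _ _
  have hBreg : ∀ a ∈ B, a.IsRegular := fun a ha => hA a ha.1
  have hBble : ∀ b ∈ B, b ≤ β₀ := by
    rintro b ⟨hbA, hbκ⟩
    by_contra h
    push_neg at h
    exact absurd hbκ (not_lt.mpr (hβ₀ b hbA h))
  have hkey : Cardinal.lift.{1} κ ≤ #(piSet B) :=
    reduction hA hκreg hhigh F hFsub hFcard hFunb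
  have hBne : B.Nonempty := by
    by_contra h
    have h1 := hkey.trans (mk_piSet_le_one h)
    have h2 : (1 : Cardinal.{1}) < ℵ₀ := one_lt_aleph0
    exact absurd (lt_of_lt_of_le h2 (Cardinal.aleph0_le_lift.mpr hκreg.1)) (not_lt.mpr h1)
  have hbddB : BddAbove B := ⟨β₀, hBble⟩
  set lam : Cardinal.{0} := sSup B with hlam
  have hlamle : lam ≤ β₀ := csSup_le hBne hBble
  have hlamlt : lam < κ := lt_of_le_of_lt hlamle hβ₀κ
  have hhBle : ∀ b ∈ B, b ≤ lam := fun b hb => le_csSup hbddB hb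
  obtain ⟨b₀, hb₀⟩ := hBne
  have hlaminf : ℵ₀ ≤ lam := (hBreg b₀ hb₀).1.trans (hhBle _ hb₀)
  obtain ⟨hcount1, hcount2⟩ :=
    mk_piSet_bound hgch lam B hbddB (fun a ha => (hBreg a ha).1) ⟨b₀, hb₀⟩ rfl
  by_cases hsucclam : ∃ ν < lam, lam ≤ Order.succ ν
  · exact absurd (hkey.trans (hcount2 hsucclam))
      (not_le.mpr (Cardinal.lift_lt.mpr hlamlt))
  push_neg at hsucclam
  have hgchlam : 2 ^ lam = Order.succ lam := hgch lam ⟨hlaminf, hsucclam⟩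
  rw [hgchlam] at hcount1
  have hκeq : κ = Order.succ lam := by
    refine le_antisymm ?_ (Order.succ_le_of_lt hlamlt)
    by_contra h
    push_neg at h
    exact absurd (hkey.trans hcount1) (not_le.mpr (Cardinal.lift_lt.mpr h))
  by_cases hunb : ∀ β < lam, ∃ b ∈ B, β < b ∧ b < lam
  · have hmem := succ_mem_pcf_of_unbounded hBreg hbddB hlaminf hunb hcount1
      (hκeq ▸ hkey)
    rw [← hκeq] at hmem
    exact pcf_mono hBsubA (fun a ha => (hA a ha).1) hmem
  · -- B attains its sup and is bounded below it: counting contradiction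
    exfalso
    push_neg at hunb
    obtain ⟨β₁, hβ₁lam, hβ₁⟩ := hunb
    have hlamB : lam ∈ B := by
      obtain ⟨b, hbB, hβ₁b⟩ := exists_lt_of_lt_csSup ⟨b₀, hb₀⟩ hβ₁lam
      have hbeq : b = lam := le_antisymm (hhBle b hbB) (hβ₁ b hbB hβ₁b)
      exact hbeq ▸ hbB
    have hsplit := mk_piSet_split hlamB hhBle
    have hB'le : #(piSet (B ∩ Iio lam)) ≤ Cardinal.lift.{1} lam := by
      by_cases hne' : (B ∩ Iio lam).Nonempty
      · set lam' : Cardinal.{0} := sSup (B ∩ Iio lam) with hlam'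
        have hlam'β₁ : lam' ≤ β₁ := by
          refine csSup_le hne' ?_
          rintro b ⟨hbB, hblam⟩
          by_contra hb
          push_neg at hb
          exact absurd (hβ₁ b hbB hb) (not_le.mpr hblam)
        have hlam'lt : lam' < lam := lt_of_le_of_lt hlam'β₁ hβ₁lam
        obtain ⟨hc1, hc2⟩ := mk_piSet_bound hgch lam' (B ∩ Iio lam)
          (hbddB.mono Set.inter_subset_left)
          (fun a ha => (hBreg a ha.1).1) hne' rfl
        by_cases hsucc' : ∃ ν < lam', lam' ≤ Order.succ ν
        · exact (hc2 hsucc').trans (Cardinal.lift_le.mpr hlam'lt.le)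
        · push_neg at hsucc'
          obtain ⟨a', ha'⟩ := hne'
          have hgch' := hgch lam' ⟨(hBreg a' ha'.1).1.trans
            (le_csSup (hbddB.mono Set.inter_subset_left) ha'), hsucc'⟩
          rw [hgch'] at hc1
          exact hc1.trans (Cardinal.lift_le.mpr (Order.succ_le_of_lt hlam'lt))
      · exact (mk_piSet_le_one hne').trans
          (le_trans (by norm_num) (Cardinal.aleph0_le_lift.mpr hlaminf))
    have hfinal : #(piSet B) ≤ Cardinal.lift.{1} lam := by
      refine hsplit.trans ?_
      calc #(piSet (B ∩ Iio lam)) * Cardinal.lift.{1} lam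
          ≤ Cardinal.lift.{1} lam * Cardinal.lift.{1} lam := mul_le_mul_left hB'le _
        _ = Cardinal.lift.{1} lam := Cardinal.mul_eq_self (Cardinal.aleph0_le_lift.mpr hlaminf)
    exact absurd (hkey.trans hfinal) (not_le.mpr (Cardinal.lift_lt.mpr hlamlt))

end TukeySpec
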